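/- For the distance function L(b) := Σ_{k=1}^p ∫ [Σ_{i=1}^n Σ_{t=1}^T d_{itk}(1{y_{it} − x_{it}'b ≤ z_t} − 1{−y_{it} + x_{it}'b < z_t})]² dH(z), where dH integrates each pair of coordinates z_s, z_t over ℝ with Lebesgue measure, one has the closed form L(b) = 4 Σ_{k=1}^p [Σ_{i=1}^n Σ_{t=1}^T d_{itk}(y_{it} − x_{it}'b)]². -/

import Mathlib

open MeasureTheory

lemma key (a : ℝ) :
    MeasureTheory.Integrable (fun z : ℝ =>
      (if a ≤ z then (1:ℝ) else 0) - (if -a < z then (1:ℝ) else 0)) ∧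
    (∫ z : ℝ, ((if a ≤ z then (1:ℝ) else 0) - (if -a < z then (1:ℝ) else 0))) = -2 * a := by
  rcases le_or_gt a 0 with ha | ha
  · have heq : (fun z : ℝ => (if a ≤ z then (1:ℝ) else 0) - (if -a < z then (1:ℝ) else 0))
        = (Set.Icc a (-a)).indicator (fun _ => (1:ℝ)) := by
      funext z
      by_cases h1 : a ≤ z <;> by_cases h2 : -a < z
      · simp [Set.indicator_apply, Set.mem_Icc, h1, h2, not_le.mpr h2]
      · simp [Set.indicator_apply, Set.mem_Icc, h1, h2, not_lt.mp h2]
      · push_neg at h1; linarith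
      · simp [Set.indicator_apply, Set.mem_Icc, h1, h2]
    constructor
    · rw [heq]
      exact (integrable_indicator_iff measurableSet_Icc).2
        (integrableOn_const measure_Icc_lt_top.ne)
    · rw [heq, MeasureTheory.integral_indicator measurableSet_Icc, setIntegral_const,
        measureReal_def, Real.volume_Icc, ENNReal.toReal_ofReal (by linarith)]
      simp only [smul_eq_mul]; ring
  · have heq : (fun z : ℝ => (if a ≤ z then (1:ℝ) else 0) - (if -a < z then (1:ℝ) else 0))
        = fun z => -((Set.Ioo (-a) a).indicator (fun _ => (1:ℝ)) z) := by
      funext z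
      by_cases h1 : a ≤ z <;> by_cases h2 : -a < z
      · simp [Set.indicator_apply, Set.mem_Ioo, h1, h2, not_lt.mpr h1]
      · push_neg at h2; linarith
      · simp [Set.indicator_apply, Set.mem_Ioo, h1, h2, not_le.mp h1]
      · simp [Set.indicator_apply, Set.mem_Ioo, h1, h2]
    have hint : MeasureTheory.Integrable ((Set.Ioo (-a) a).indicator (fun _ => (1:ℝ))) :=
      (integrable_indicator_iff measurableSet_Ioo).2
        (integrableOn_const measure_Ioo_lt_top.ne)
    constructor
    · rw [heq]; exact hint.neg
    · rw [heq, MeasureTheory.integral_neg,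
        MeasureTheory.integral_indicator measurableSet_Ioo, setIntegral_const,
        measureReal_def, Real.volume_Ioo, ENNReal.toReal_ofReal (by linarith)]
      simp only [smul_eq_mul]; ring

theorem stmt2 (n T p : ℕ) (y : Fin n → Fin T → ℝ) (x : Fin n → Fin T → Fin p → ℝ)
    (d : Fin n → Fin T → Fin p → ℝ) (b : Fin p → ℝ) :
    (∑ k, ∫ w : ℝ, ∫ z : ℝ,
        (∑ i, ∑ t, d i t k *
          ((if y i t - ∑ j, x i t j * b j ≤ z then (1:ℝ) else 0) -
           (if -(y i t) + ∑ j, x i t j * b j < z then (1:ℝ) else 0))) *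
        (∑ i, ∑ t, d i t k *
          ((if y i t - ∑ j, x i t j * b j ≤ w then (1:ℝ) else 0) -
           (if -(y i t) + ∑ j, x i t j * b j < w then (1:ℝ) else 0))))
    = 4 * ∑ k, (∑ i, ∑ t, d i t k * (y i t - ∑ j, x i t j * b j))^2 := by
  set a : Fin n → Fin T → ℝ := fun i t => y i t - ∑ j, x i t j * b j with ha
  have hneg : ∀ i t, -(y i t) + ∑ j, x i t j * b j = -(a i t) := by
    intro i t; simp [ha]; ring
  have congr1 : ∀ k : Fin p,
      (∫ w : ℝ, ∫ z : ℝ,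
        (∑ i, ∑ t, d i t k *
          ((if y i t - ∑ j, x i t j * b j ≤ z then (1:ℝ) else 0) -
           (if -(y i t) + ∑ j, x i t j * b j < z then (1:ℝ) else 0))) *
        (∑ i, ∑ t, d i t k *
          ((if y i t - ∑ j, x i t j * b j ≤ w then (1:ℝ) else 0) -
           (if -(y i t) + ∑ j, x i t j * b j < w then (1:ℝ) else 0))))
      = (∑ i, ∑ t, d i t k * (-2 * a i t))^2 := by
    intro k
    have hg : MeasureTheory.Integrable (fun z : ℝ => ∑ i, ∑ t, d i t k *
        ((if a i t ≤ z then (1:ℝ) else 0) - (if -(a i t) < z then (1:ℝ) else 0))) := by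
      apply MeasureTheory.integrable_finset_sum
      intro i _
      apply MeasureTheory.integrable_finset_sum
      intro t _
      exact ((key (a i t)).1).const_mul _
    have hgint : (∫ z : ℝ, ∑ i, ∑ t, d i t k *
        ((if a i t ≤ z then (1:ℝ) else 0) - (if -(a i t) < z then (1:ℝ) else 0)))
        = ∑ i, ∑ t, d i t k * (-2 * a i t) := by
      rw [MeasureTheory.integral_finset_sum _ (fun i _ => by
        exact MeasureTheory.integrable_finset_sum _ (fun t _ => ((key (a i t)).1).const_mul _))]
      refine Finset.sum_congr rfl fun i _ => ?_
      rw [MeasureTheory.integral_finset_sum _ (fun t _ => ((key (a i t)).1).const_mul _)]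
      refine Finset.sum_congr rfl fun t _ => ?_
      rw [MeasureTheory.integral_const_mul, (key (a i t)).2]
    simp only [hneg, show ∀ i t, y i t - ∑ j, x i t j * b j = a i t from fun i t => rfl]
    have : ∀ w : ℝ, (∫ z : ℝ,
        (∑ i, ∑ t, d i t k *
          ((if a i t ≤ z then (1:ℝ) else 0) - (if -(a i t) < z then (1:ℝ) else 0))) *
        (∑ i, ∑ t, d i t k *
          ((if a i t ≤ w then (1:ℝ) else 0) - (if -(a i t) < w then (1:ℝ) else 0))))
        = (∑ i, ∑ t, d i t k * (-2 * a i t)) *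
          (∑ i, ∑ t, d i t k *
          ((if a i t ≤ w then (1:ℝ) else 0) - (if -(a i t) < w then (1:ℝ) else 0))) := by
      intro w
      rw [MeasureTheory.integral_mul_const, hgint]
    simp only [this]
    rw [MeasureTheory.integral_const_mul, hgint]
    ring
  simp only [congr1]
  rw [Finset.mul_sum]
  refine Finset.sum_congr rfl fun k _ => ?_
  have h2 : (∑ i, ∑ t, d i t k * (-2 * a i t)) = -2 * ∑ i, ∑ t, d i t k * a i t := by
    simp only [show ∀ u v : ℝ, u * (-2 * v) = -2 * (u * v) from fun u v => by ring,
      ← Finset.mul_sum]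
  rw [h2]; ring
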